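/- arXiv:1612.09512 — 3 statements merged into one kernel-verified Lean document; each statement's English description precedes it below -/
import Mathlib

section
/- Let L₁,…,L_m and H be matrices on ℂ^d, and δ ≥ 0. Define A₀ = I − (δ/2)Σ_j L_j†L_j − iδH and A_j = √δ·L_j for j = 1,…,m. Then ‖Σ_{j=0}^m A_j†A_j − I‖ ≤ δ²·(Σ_j ‖L_j‖² + ‖H‖)², where ‖·‖ is the operator norm. -/
open scoped ComplexOrder Matrix

/-- The trace norm `‖A‖₁ = Tr √(AᴴA)` of a complex square matrix. -/
noncomputable def traceNorm {n : Type*} [Fintype n] [DecidableEq n]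
    (A : Matrix n n ℂ) : ℝ :=
  ((Matrix.posSemidef_conjTranspose_mul_self A).1.eigenvectorUnitary.1 *
      Matrix.diagonal ((fun x : ℝ => (x : ℂ)) ∘ (√·) ∘ (Matrix.posSemidef_conjTranspose_mul_self A).1.eigenvalues) *
      (star (Matrix.posSemidef_conjTranspose_mul_self A).1.eigenvectorUnitary.1 :
        Matrix n n ℂ)).trace.re

/-- The operator norm (largest singular value) of a complex square matrix. -/
noncomputable def opNorm {n : Type*} [Fintype n] [DecidableEq n]
    (A : Matrix n n ℂ) : ℝ :=
  ‖LinearMap.toContinuousLinearMap (Matrix.toEuclideanLin A)‖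
open scoped Matrix.Norms.L2Operator

/-- The Kraus operators `A₀ = I − (δ/2)∑ⱼ Lⱼᴴ Lⱼ − iδH`, `Aⱼ = √δ·Lⱼ` approximately
satisfy the trace-preserving condition:
`‖∑ⱼ AⱼᴴAⱼ − I‖ ≤ δ²(∑ⱼ‖Lⱼ‖² + ‖H‖)²`. -/
theorem kraus_approx_trace_preserving {d m : ℕ} (H : Matrix (Fin d) (Fin d) ℂ)
    (hH : H.IsHermitian) (L : Fin m → Matrix (Fin d) (Fin d) ℂ) (δ : ℝ) (hδ : 0 ≤ δ)
    (A₀ : Matrix (Fin d) (Fin d) ℂ)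
    (hA₀ : A₀ = 1 - ((δ : ℂ)/2) • (∑ j, (L j)ᴴ * L j) - (Complex.I * (δ : ℂ)) • H)
    (A : Fin m → Matrix (Fin d) (Fin d) ℂ)
    (hA : ∀ j, A j = ((Real.sqrt δ : ℝ) : ℂ) • L j) :
    opNorm (A₀ᴴ * A₀ + (∑ j, (A j)ᴴ * A j) - 1)
      ≤ δ ^ 2 * ((∑ j, opNorm (L j) ^ 2) + opNorm H) ^ 2 := by
  have hop : ∀ M : Matrix (Fin d) (Fin d) ℂ, opNorm M = ‖M‖ := fun M => rfl
  set S := ∑ j, (L j)ᴴ * L j with hS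
  have hSherm : Sᴴ = S := by
    simp [hS, Matrix.conjTranspose_sum, Matrix.conjTranspose_mul]
  set B : Matrix (Fin d) (Fin d) ℂ := ((1:ℂ)/2) • S + Complex.I • H with hB
  have hBH : Bᴴ = ((1:ℂ)/2) • S - Complex.I • H := by
    simp [hB, Matrix.conjTranspose_add, Matrix.conjTranspose_smul, hSherm, hH.eq, sub_eq_add_neg]
  have hsum : (∑ j, (A j)ᴴ * A j) = (δ : ℂ) • S := by
    simp only [hA, Matrix.conjTranspose_smul, Matrix.smul_mul, Matrix.mul_smul, smul_smul]
    rw [← Finset.smul_sum]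
    congr 1
    simp [← Complex.ofReal_mul, Real.mul_self_sqrt hδ]
  have key : A₀ᴴ * A₀ + (∑ j, (A j)ᴴ * A j) - 1 = ((δ:ℂ)^2) • (Bᴴ * B) := by
    rw [hsum, hA₀, hBH, hB]
    simp only [Matrix.conjTranspose_sub, Matrix.conjTranspose_one, Matrix.conjTranspose_smul,
      hSherm, hH.eq, Matrix.sub_mul, Matrix.mul_sub, Matrix.add_mul, Matrix.mul_add,
      Matrix.smul_mul, Matrix.mul_smul, Matrix.one_mul, Matrix.mul_one, smul_smul, smul_sub,
      smul_add, Complex.star_def, map_mul, map_div₀, Complex.conj_I, Complex.conj_ofReal,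
      map_ofNat]
    module
  simp only [hop]
  rw [key, norm_smul]
  have hnormS : ‖S‖ ≤ ∑ j, ‖L j‖ ^ 2 := by
    refine (norm_sum_le _ _).trans ?_
    refine Finset.sum_le_sum fun j _ => ?_
    rw [Matrix.l2_opNorm_conjTranspose_mul_self, sq]
  have hB2 : ‖B‖ ≤ (∑ j, ‖L j‖ ^ 2) + ‖H‖ := by
    refine (norm_add_le _ _).trans ?_
    gcongr
    · rw [norm_smul]
      have h0 : (0:ℝ) ≤ ∑ j, ‖L j‖ ^ 2 :=
        Finset.sum_nonneg fun j _ => sq_nonneg _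
      calc ‖(1:ℂ)/2‖ * ‖S‖ ≤ 1 * ‖S‖ := by
            gcongr; simp; norm_num
        _ = ‖S‖ := one_mul _
        _ ≤ _ := hnormS
    · rw [norm_smul, Complex.norm_I, one_mul]
  have hBB : ‖Bᴴ * B‖ = ‖B‖ * ‖B‖ := Matrix.l2_opNorm_conjTranspose_mul_self B
  rw [hBB]
  have hδ2 : ‖((δ:ℂ)^2)‖ = δ ^ 2 := by
    rw [← Complex.ofReal_pow]; simp [abs_of_nonneg (sq_nonneg δ)]
  rw [hδ2]
  have hBnn : (0:ℝ) ≤ ‖B‖ := norm_nonneg _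
  have : ‖B‖ * ‖B‖ ≤ ((∑ j, ‖L j‖ ^ 2) + ‖H‖) ^ 2 := by
    rw [sq]; exact mul_le_mul hB2 hB2 hBnn (hBnn.trans hB2)
  exact mul_le_mul_of_nonneg_left this (sq_nonneg δ)
end

section
/- Let J be a Hermitian matrix on ℂ^d ⊗ ℂ^{2ⁿ} with ‖J‖ ≤ 1 whose (0,0) block vanishes, i.e., (⟨0|⊗I) J (|0⟩⊗I) = 0. Then for any unit vector |ψ⟩ ∈ ℂ^{2ⁿ} and 0 < δ ≤ 1, one can write e^{−iJδ}(|0⟩⊗|ψ⟩) = |0⟩⊗|ψ⟩ − iδ′|Ψ⊥⟩ + δ″|Φ⟩ where (|0⟩⟨0|⊗I)|Ψ⊥⟩ = 0, |Ψ⊥⟩ and |Φ⟩ are unit vectors (or zero), 0 ≤ δ′ ≤ δ, and 0 ≤ δ″ ≤ e^δ − 1 − δ. -/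
open scoped ComplexOrder Matrix

/-- The Euclidean norm of a finite-dimensional complex vector. -/
noncomputable def vnorm {ι : Type*} [Fintype ι] (v : ι → ℂ) : ℝ :=
  Real.sqrt (∑ x, Complex.normSq (v x))

/-- The tensor product of two vectors: `(u ⊗ v) (i,j) = u i * v j`. -/
def tvec {m d : Type*} (u : m → ℂ) (v : d → ℂ) : m × d → ℂ := fun p => u p.1 * v p.2

open NormedSpace Nat

lemma vnorm_eq_norm {ι : Type*} [Fintype ι] (v : ι → ℂ) :
    vnorm v = ‖(WithLp.equiv 2 (ι → ℂ)).symm v‖ := by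
  rw [EuclideanSpace.norm_eq]
  unfold vnorm
  congr 1
  refine Finset.sum_congr rfl fun i _ => ?_
  rw [WithLp.equiv_symm_apply, PiLp.toLp_apply, Complex.sq_norm]

lemma vnorm_nonneg {ι : Type*} [Fintype ι] (v : ι → ℂ) : 0 ≤ vnorm v :=
  Real.sqrt_nonneg _

lemma vnorm_eq_zero_iff {ι : Type*} [Fintype ι] {v : ι → ℂ} : vnorm v = 0 ↔ v = 0 := by
  rw [vnorm_eq_norm, norm_eq_zero]
  constructor
  · intro h
    have := congrArg (WithLp.equiv 2 (ι → ℂ)) h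
    simpa using this
  · rintro rfl
    simp

lemma vnorm_smul {ι : Type*} [Fintype ι] (c : ℂ) (v : ι → ℂ) :
    vnorm (c • v) = ‖c‖ * vnorm v := by
  rw [vnorm_eq_norm, vnorm_eq_norm, ← norm_smul]
  congr 1

lemma vnorm_mulVec_le {ι : Type*} [Fintype ι] [DecidableEq ι] (M : Matrix ι ι ℂ) (x : ι → ℂ) :
    vnorm (M.mulVec x) ≤ opNorm M * vnorm x := by
  rw [vnorm_eq_norm, vnorm_eq_norm]
  have h := (LinearMap.toContinuousLinearMap (Matrix.toEuclideanLin M)).le_opNorm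
    ((WithLp.equiv 2 (ι → ℂ)).symm x)
  rw [LinearMap.coe_toContinuousLinearMap'] at h
  rwa [WithLp.equiv_symm_apply, Matrix.toEuclideanLin_toLp, Matrix.toLin'_apply] at h

lemma exp_remainder_bound {𝔸 : Type*} [NormedRing 𝔸] [NormedAlgebra ℂ 𝔸] [CompleteSpace 𝔸]
    (T : 𝔸) {δ : ℝ} (hT : ‖T‖ ≤ δ) : ‖exp T - 1 - T‖ ≤ Real.exp δ - 1 - δ := by
  have hδ0 : 0 ≤ δ := le_trans (norm_nonneg T) hT
  have hs : Summable (fun n : ℕ => ((n ! : ℂ))⁻¹ • T ^ n) := expSeries_summable' T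
  have h2 : (∑ i ∈ Finset.range 2, ((i ! : ℂ))⁻¹ • T ^ i) = 1 + T := by
    simp [Finset.sum_range_succ]
  have hrepr : exp T - 1 - T = ∑' i : ℕ, (((i + 2)! : ℂ))⁻¹ • T ^ (i + 2) := by
    have := Summable.sum_add_tsum_nat_add 2 hs
    rw [h2] at this
    simp only [exp_eq_tsum ℂ]
    rw [← this]
    abel
  have hg : Summable (fun i : ℕ => δ ^ (i + 2) / (i + 2)!) :=
    (summable_nat_add_iff 2).mpr (Real.summable_pow_div_factorial δ)
  have hle : ∀ i : ℕ, ‖(((i + 2)! : ℂ))⁻¹ • T ^ (i + 2)‖ ≤ δ ^ (i + 2) / (i + 2)! := by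
    intro i
    calc ‖(((i + 2)! : ℂ))⁻¹ • T ^ (i + 2)‖
        = (((i + 2)! : ℝ))⁻¹ * ‖T ^ (i + 2)‖ := by
          rw [norm_smul, norm_inv, Complex.norm_natCast]
      _ ≤ (((i + 2)! : ℝ))⁻¹ * δ ^ (i + 2) := by
          refine mul_le_mul_of_nonneg_left ?_ (by positivity)
          exact (norm_pow_le' T (by omega)).trans
            (pow_le_pow_left₀ (norm_nonneg T) hT _)
      _ = δ ^ (i + 2) / (i + 2)! := by rw [div_eq_inv_mul]
  have hsn : Summable (fun i : ℕ => ‖(((i + 2)! : ℂ))⁻¹ • T ^ (i + 2)‖) :=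
    Summable.of_nonneg_of_le (fun i => norm_nonneg _) hle hg
  have h1 : ‖exp T - 1 - T‖ ≤ ∑' i : ℕ, δ ^ (i + 2) / (i + 2)! := by
    rw [hrepr]
    exact (norm_tsum_le_tsum_norm hsn).trans (Summable.tsum_le_tsum hle hsn hg)
  refine h1.trans (le_of_eq ?_)
  have hre : Real.exp δ = ∑' n : ℕ, δ ^ n / n ! := by
    rw [Real.exp_eq_exp_ℝ, exp_eq_tsum_div]
  have hthis := Summable.sum_add_tsum_nat_add 2 (Real.summable_pow_div_factorial δ)
  have h2' : (∑ i ∈ Finset.range 2, δ ^ i / i !) = 1 + δ := by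
    simp [Finset.sum_range_succ]
  rw [h2'] at hthis
  rw [hre, ← hthis]
  ring

lemma clm_exp_comm {ι : Type*} [Fintype ι] [DecidableEq ι] (A : Matrix ι ι ℂ) :
    Matrix.toEuclideanCLM (𝕜 := ℂ) (exp A) = exp (Matrix.toEuclideanCLM (𝕜 := ℂ) A) := by
  letI : MetricSpace (Matrix ι ι ℂ) := Matrix.instL2OpMetricSpace
  letI : NormedAddCommGroup (Matrix ι ι ℂ) := Matrix.instL2OpNormedAddCommGroup
  letI : NormedRing (Matrix ι ι ℂ) := Matrix.instL2OpNormedRing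
  letI : NormedAlgebra ℂ (Matrix ι ι ℂ) := Matrix.instL2OpNormedAlgebra
  have hc : Continuous (Matrix.toEuclideanCLM (𝕜 := ℂ) (n := ι)) := by
    have : Isometry (Matrix.toEuclideanCLM (𝕜 := ℂ) (n := ι)) :=
      AddMonoidHomClass.isometry_of_norm _ (fun a => (Matrix.cstar_norm_def a).symm)
    exact this.continuous
  exact map_exp_of_mem_ball (𝕂 := ℂ) (Matrix.toEuclideanCLM (𝕜 := ℂ) (n := ι) : Matrix ι ι ℂ ≃⋆ₐ[ℂ] _) hc A
    ((expSeries_radius_eq_top ℂ (Matrix ι ι ℂ)).symm ▸ edist_lt_top _ _)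

lemma clm_apply_pt {ι : Type*} [Fintype ι] [DecidableEq ι] (M : Matrix ι ι ℂ) (x : ι → ℂ)
    (i : ι) :
    (Matrix.toEuclideanCLM (𝕜 := ℂ) M) ((WithLp.equiv 2 (ι → ℂ)).symm x) i = M.mulVec x i := by
  rw [WithLp.equiv_symm_apply, Matrix.toEuclideanCLM_toLp]


set_option maxHeartbeats 1000000
set_option synthInstance.maxHeartbeats 400000

/-- Short-time evolution of a product state under a Hamiltonian with vanishing `(0,0)`
block: `e^{−iJδ}(|0⟩⊗|ψ⟩) = |0⟩⊗|ψ⟩ − iδ′|Ψ⊥⟩ + δ″|Φ⟩` with `|Ψ⊥⟩` orthogonal to the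
`|0⟩` ancilla sector, `0 ≤ δ′ ≤ δ` and `0 ≤ δ″ ≤ e^δ − 1 − δ`. -/
theorem exp_block_offdiag_decomposition {d n : ℕ} [NeZero d]
    (J : Matrix (Fin d × Fin (2^n)) (Fin d × Fin (2^n)) ℂ)
    (hJ : J.IsHermitian) (hJn : opNorm J ≤ 1)
    (hblock : ∀ x y : Fin (2^n), J ((0 : Fin d), x) ((0 : Fin d), y) = 0)
    (ψ : Fin (2^n) → ℂ) (hψ : vnorm ψ = 1)
    (δ : ℝ) (hδ0 : 0 < δ) (hδ1 : δ ≤ 1) :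
    ∃ (δ' δ'' : ℝ) (Ψperp Φ : Fin d × Fin (2^n) → ℂ),
      (NormedSpace.exp ((-(Complex.I * (δ : ℂ))) • J)).mulVec
          (tvec (Pi.single (0 : Fin d) 1) ψ)
        = tvec (Pi.single (0 : Fin d) 1) ψ - (Complex.I * (δ' : ℂ)) • Ψperp
            + ((δ'' : ℝ) : ℂ) • Φ
      ∧ (∀ x : Fin (2^n), Ψperp (0, x) = 0)
      ∧ (vnorm Ψperp = 1 ∨ Ψperp = 0)
      ∧ (vnorm Φ = 1 ∨ Φ = 0)
      ∧ 0 ≤ δ' ∧ δ' ≤ δ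
      ∧ 0 ≤ δ'' ∧ δ'' ≤ Real.exp δ - 1 - δ := by
  set v : Fin d × Fin (2^n) → ℂ := tvec (Pi.single (0 : Fin d) 1) ψ with hv
  set A : Matrix (Fin d × Fin (2^n)) (Fin d × Fin (2^n)) ℂ := (-(Complex.I * (δ : ℂ))) • J
    with hA
  set v' : EuclideanSpace ℂ (Fin d × Fin (2^n)) :=
    (WithLp.equiv 2 ((Fin d × Fin (2^n)) → ℂ)).symm v with hv'
  set T : EuclideanSpace ℂ (Fin d × Fin (2^n)) →L[ℂ] EuclideanSpace ℂ (Fin d × Fin (2^n)) :=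
    Matrix.toEuclideanCLM (𝕜 := ℂ) A with hT
  set R : EuclideanSpace ℂ (Fin d × Fin (2^n)) →L[ℂ] EuclideanSpace ℂ (Fin d × Fin (2^n)) :=
    NormedSpace.exp T - 1 - T with hR
  set w : Fin d × Fin (2^n) → ℂ := J.mulVec v with hw
  set r : ℝ := vnorm w with hr
  set u : Fin d × Fin (2^n) → ℂ := fun i => (R v') i with hu
  set δ'' : ℝ := vnorm u with hδ''
  -- basic facts
  have hψsum : (∑ y, Complex.normSq (ψ y)) = 1 := by
    have h := congrArg (fun t => t ^ 2) hψ
    simp only [vnorm] at h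
    rw [Real.sq_sqrt (Finset.sum_nonneg fun _ _ => Complex.normSq_nonneg _)] at h
    simpa using h
  have hvnorm : vnorm v = 1 := by
    unfold vnorm
    rw [hv]
    have : (∑ p : Fin d × Fin (2^n), Complex.normSq (tvec (Pi.single (0 : Fin d) 1) ψ p))
        = 1 := by
      rw [Fintype.sum_prod_type]
      have hj : ∀ j : Fin d,
          (∑ y, Complex.normSq ((Pi.single (0 : Fin d) (1:ℂ) : Fin d → ℂ) j * ψ y))
          = if j = 0 then 1 else 0 := by
        intro j
        rcases eq_or_ne j 0 with rfl | hj
        · simp [hψsum]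
        · simp [Pi.single_eq_of_ne hj, hj]
      simp only [tvec]
      rw [Finset.sum_congr rfl (fun j _ => hj j)]
      simp
    rw [this, Real.sqrt_one]
  have hw0 : ∀ x : Fin (2^n), w (0, x) = 0 := by
    intro x
    rw [hw, Matrix.mulVec, dotProduct]
    rw [Fintype.sum_prod_type]
    refine Finset.sum_eq_zero fun j _ => ?_
    rcases eq_or_ne j 0 with rfl | hj
    · refine Finset.sum_eq_zero fun y _ => ?_
      simp [hblock x y, hv, tvec]
    · refine Finset.sum_eq_zero fun y _ => ?_
      simp [hv, tvec, Pi.single_eq_of_ne hj]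
  have hr1 : r ≤ 1 := by
    have := vnorm_mulVec_le J v
    rw [hvnorm, mul_one] at this
    exact le_trans this hJn
  have hr0 : 0 ≤ r := vnorm_nonneg w
  -- norm of T
  have hTnorm : ‖T‖ ≤ δ := by
    have hJT : ‖Matrix.toEuclideanCLM (𝕜 := ℂ) J‖ = opNorm J := by
      have heq : Matrix.toEuclideanCLM (𝕜 := ℂ) J
          = LinearMap.toContinuousLinearMap (Matrix.toEuclideanLin J) :=
        ContinuousLinearMap.coe_injective (by
          rw [Matrix.coe_toEuclideanCLM_eq_toEuclideanLin, LinearMap.coe_toContinuousLinearMap])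
      rw [heq]
      rfl
    refine ContinuousLinearMap.opNorm_le_bound _ hδ0.le fun x => ?_
    have h1 : T x = (-(Complex.I * (δ : ℂ))) • (Matrix.toEuclideanCLM (𝕜 := ℂ) J x) := by
      rw [hT, hA, map_smul, ContinuousLinearMap.smul_apply]
    rw [h1, norm_smul]
    have h2 : ‖-(Complex.I * (δ : ℂ))‖ = δ := by
      rw [norm_neg, norm_mul, Complex.norm_I, one_mul, Complex.norm_real,
        Real.norm_eq_abs, abs_of_pos hδ0]
    rw [h2]
    calc δ * ‖Matrix.toEuclideanCLM (𝕜 := ℂ) J x‖ ≤ δ * (opNorm J * ‖x‖) := by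
          refine mul_le_mul_of_nonneg_left ?_ hδ0.le
          have h3 := (Matrix.toEuclideanCLM (𝕜 := ℂ) J).le_opNorm x
          rwa [hJT] at h3
      _ ≤ δ * (1 * ‖x‖) :=
          mul_le_mul_of_nonneg_left (mul_le_mul_of_nonneg_right hJn (norm_nonneg x)) hδ0.le
      _ = δ * ‖x‖ := by ring
  have hv'norm : ‖v'‖ = 1 := by rw [hv', ← vnorm_eq_norm, hvnorm]
  have hRnorm : ‖R‖ ≤ Real.exp δ - 1 - δ := exp_remainder_bound T hTnorm
  have hδ''le : δ'' ≤ Real.exp δ - 1 - δ := by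
    have h1 : vnorm u = ‖R v'‖ := by
      rw [vnorm_eq_norm]
      rfl
    have h2 : ‖R v'‖ ≤ ‖R‖ * ‖v'‖ := R.le_opNorm v'
    rw [hδ'', h1]
    rw [hv'norm, mul_one] at h2
    exact h2.trans hRnorm
  -- the key pointwise evolution identity
  have hd : NormedSpace.exp T v' = v' + T v' + R v' := by
    rw [hR]
    simp only [ContinuousLinearMap.sub_apply, ContinuousLinearMap.add_apply,
      ContinuousLinearMap.one_apply]
    abel
  have key : ∀ i : Fin d × Fin (2^n), (NormedSpace.exp A).mulVec v i
      = v i + (-(Complex.I * (δ : ℂ))) * w i + u i := by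
    intro i
    have h1 : (NormedSpace.exp A).mulVec v i
        = (Matrix.toEuclideanCLM (𝕜 := ℂ) (NormedSpace.exp A)) v' i :=
      (clm_apply_pt _ _ i).symm
    rw [h1, clm_exp_comm, ← hT, hd]
    have h2 : (T v') i = (-(Complex.I * (δ : ℂ))) * w i := by
      rw [hT]
      rw [clm_apply_pt A v i]
      rw [hA, Matrix.smul_mulVec, ← hw]
      simp
    have h3 : (v' + T v' + R v') i = v' i + (T v') i + (R v') i := by
      rw [PiLp.add_apply, PiLp.add_apply]
    rw [h3, h2]
    have h4 : v' i = v i := by rw [hv', WithLp.equiv_symm_apply, PiLp.toLp_apply]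
    rw [h4]
  -- construct the witnesses
  refine ⟨δ * r, δ'', ((r : ℂ))⁻¹ • w, (((δ'' : ℝ) : ℂ))⁻¹ • u, ?_, ?_, ?_, ?_, ?_, ?_, ?_, ?_⟩
  · funext i
    rw [key i]
    simp only [Pi.add_apply, Pi.sub_apply, Pi.smul_apply, smul_eq_mul]
    have e1 : (Complex.I * ((δ * r : ℝ) : ℂ)) * (((r : ℂ))⁻¹ * w i)
        = (Complex.I * (δ : ℂ)) * w i := by
      rcases eq_or_ne r 0 with h0 | h0
      · have : w = 0 := vnorm_eq_zero_iff.mp (by rw [← hr, h0])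
        rw [this]
        simp
      · have : (r : ℂ) ≠ 0 := by exact_mod_cast h0
        push_cast
        field_simp
    have e2 : (((δ'' : ℝ) : ℂ)) * ((((δ'' : ℝ) : ℂ))⁻¹ * u i) = u i := by
      rcases eq_or_ne δ'' 0 with h0 | h0
      · have : u = 0 := vnorm_eq_zero_iff.mp (by rw [← hδ'', h0])
        rw [this, h0]
        simp
      · have : ((δ'' : ℝ) : ℂ) ≠ 0 := by exact_mod_cast h0
        field_simp
    rw [e1, e2]
    ring
  · intro x
    simp [hw0 x]
  · rcases eq_or_ne r 0 with h0 | h0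
    · right
      have : w = 0 := vnorm_eq_zero_iff.mp (by rw [← hr, h0])
      rw [this]
      simp
    · left
      rw [vnorm_smul, ← hr, norm_inv, Complex.norm_real, Real.norm_eq_abs,
        abs_of_nonneg hr0, inv_mul_cancel₀ h0]
  · rcases eq_or_ne δ'' 0 with h0 | h0
    · right
      have : u = 0 := vnorm_eq_zero_iff.mp (by rw [← hδ'', h0])
      rw [this]
      simp
    · left
      rw [vnorm_smul, ← hδ'', norm_inv, Complex.norm_real, Real.norm_eq_abs,
        abs_of_nonneg (vnorm_nonneg u), inv_mul_cancel₀ h0]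
  · exact mul_nonneg hδ0.le hr0
  · calc δ * r ≤ δ * 1 := mul_le_mul_of_nonneg_left hr1 hδ0.le
      _ = δ := mul_one δ
  · exact vnorm_nonneg u
  · exact hδ''le
end

section
/- Let W be a unitary, P₀ and P₁ orthogonal projections, |Ψ⟩ a unit vector with P₁|Ψ⟩ = |Ψ⟩, and suppose W|Ψ⟩ = ½|Φ⟩ + (√3/2)|Φ⊥⟩ where P₀|Φ⟩ = |Φ⟩, P₀|Φ⊥⟩ = 0, ‖|Φ⊥⟩‖ = 1. Suppose further that P₁W†P₀W|Ψ⟩ = ¼|Ψ⟩ + |e⟩ with ‖|e⟩‖ ≤ ε. Then the oblivious amplitude amplification operator F = −W(I−2P₁)W†(I−2P₀)W satisfies ‖F|Ψ⟩ − |Φ⟩‖ ≤ 4ε. -/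
/-- Oblivious amplitude amplification: if `W|Ψ⟩ = ½|Φ⟩ + (√3/2)|Φ⊥⟩` with `P₀|Φ⟩ = |Φ⟩`,
`P₀|Φ⊥⟩ = 0`, `P₁|Ψ⟩ = |Ψ⟩`, and `P₁W†P₀W|Ψ⟩ = ¼|Ψ⟩ + |e⟩` with `‖e‖ ≤ ε`, then the
operator `F = −W(I−2P₁)W†(I−2P₀)W` satisfies `‖F|Ψ⟩ − |Φ⟩‖ ≤ 4ε`. -/
theorem oblivious_amplitude_amplification {E : Type*} [NormedAddCommGroup E]
    [InnerProductSpace ℂ E] [CompleteSpace E]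
    (W P₀ P₁ : E →L[ℂ] E) (hW : W ∈ unitary (E →L[ℂ] E))
    (hP₀sa : IsSelfAdjoint P₀) (hP₀idem : P₀ ∘L P₀ = P₀)
    (hP₁sa : IsSelfAdjoint P₁) (hP₁idem : P₁ ∘L P₁ = P₁)
    (Ψ Φ Φperp e : E) (ε : ℝ)
    (hΨ : ‖Ψ‖ = 1) (hP₁Ψ : P₁ Ψ = Ψ)
    (hWΨ : W Ψ = ((1:ℂ)/2) • Φ + ((Real.sqrt 3 / 2 : ℝ) : ℂ) • Φperp)
    (hΦ : P₀ Φ = Φ) (hΦperp : P₀ Φperp = 0) (hΦperpn : ‖Φperp‖ = 1)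
    (he : P₁ ((ContinuousLinearMap.adjoint W) (P₀ (W Ψ))) = ((1:ℂ)/4) • Ψ + e)
    (hεe : ‖e‖ ≤ ε) :
    ‖(-(W ∘L ((1 - (2:ℂ) • P₁) ∘L ((ContinuousLinearMap.adjoint W) ∘L
        ((1 - (2:ℂ) • P₀) ∘L W))))) Ψ - Φ‖ ≤ 4 * ε := by
  set A := ContinuousLinearMap.adjoint W with hA
  obtain ⟨hW1, hW2⟩ := Unitary.mem_iff.mp hW
  rw [ContinuousLinearMap.star_eq_adjoint, ← hA] at hW1 hW2
  have hAW : ∀ x, A (W x) = x := fun x => by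
    have := congrArg (fun T : E →L[ℂ] E => T x) hW1
    simpa [ContinuousLinearMap.mul_apply] using this
  have hWA : ∀ x, W (A x) = x := fun x => by
    have := congrArg (fun T : E →L[ℂ] E => T x) hW2
    simpa [ContinuousLinearMap.mul_apply] using this
  have h1 : P₀ (W Ψ) = ((1:ℂ)/2) • Φ := by
    rw [hWΨ]; simp [map_add, map_smul, hΦ, hΦperp]
  have hΦ2 : Φ = (2:ℂ) • P₀ (W Ψ) := by
    rw [h1, smul_smul]; norm_num
  have hP₁AΦ : P₁ (A Φ) = ((1:ℂ)/2) • Ψ + (2:ℂ) • e := by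
    rw [hΦ2, map_smul, map_smul, he, smul_add, smul_smul]
    norm_num
  have s1 : (1 - (2:ℂ) • P₀) (W Ψ) = W Ψ - Φ := by
    simp only [ContinuousLinearMap.sub_apply, ContinuousLinearMap.one_apply,
      ContinuousLinearMap.smul_apply, h1, smul_smul]
    norm_num
  have s2 : A (W Ψ - Φ) = Ψ - A Φ := by rw [map_sub, hAW]
  have s3 : (1 - (2:ℂ) • P₁) (Ψ - A Φ) = (4:ℂ) • e - A Φ := by
    simp only [ContinuousLinearMap.sub_apply, ContinuousLinearMap.one_apply,
      ContinuousLinearMap.smul_apply, map_sub, hP₁Ψ, hP₁AΦ]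
    module
  have s4 : W ((4:ℂ) • e - A Φ) = (4:ℂ) • W e - Φ := by
    rw [map_sub, map_smul, hWA]
  have key : (-(W ∘L ((1 - (2:ℂ) • P₁) ∘L (A ∘L
      ((1 - (2:ℂ) • P₀) ∘L W))))) Ψ - Φ = -((4:ℂ) • W e) := by
    simp only [ContinuousLinearMap.comp_apply, ContinuousLinearMap.neg_apply]
    rw [s1, s2, s3, s4]
    abel
  have hWe : ‖W e‖ = ‖e‖ := by
    have h : (inner ℂ (W e) (W e) : ℂ) = inner ℂ e e := by
      rw [← ContinuousLinearMap.adjoint_inner_right W e (W e), ← hA, hAW]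
    rw [@norm_eq_sqrt_re_inner ℂ, @norm_eq_sqrt_re_inner ℂ E _ _ _ e, h]
  rw [key, norm_neg, norm_smul]
  simp only [hWe]
  norm_num
  linarith
end
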